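/- Christoffel–Darboux formula (left version): for w, z with w̄z ≠ 1, (1 − w̄z) Σ_{k=0}^n φ_k^L(w)† φ_k^L(z) = φ_n^{R,*}(w)† φ_n^{R,*}(z) − w̄ z φ_n^L(w)† φ_n^L(z), given that the recursion (φ_{n+1}^L, φ_{n+1}^{R,*})ᵀ = A^L(α_n, z)(φ_n^L, φ_n^{R,*})ᵀ holds with J-unitary transfer matrices. -/
import Mathlib

noncomputable section

open ContinuousLinearMap

variable {H : Type*} [NormedAddCommGroup H] [InnerProductSpace ℂ H] [CompleteSpace H]

private lemma cd_core {R : Type*} [Ring R] [Algebra ℂ R]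
    (al sal E F sa sb c d : R) (wb z : ℂ)
    (r1 : al * F = E * al) (r3 : sal * E = F * sal)
    (r4 : sal * E * al = F - 1) (r2 : E = 1 + al * F * sal) :
    (sb - wb • (sa * sal)) * (E * (d - z • (al * c))) =
      sb * d - (wb * z) • (sa * c)
        + ((wb • sa - sb * al) * (F * (z • c - sal * d))) := by
  have h1 : sal * (E * d) = F * (sal * d) := by
    rw [← mul_assoc, r3, mul_assoc]
  have h2 : sal * (E * (al * c)) = F * c - c := by
    rw [← mul_assoc, ← mul_assoc, r4, sub_mul, one_mul]
  have h3 : E * (al * c) = al * (F * c) := by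
    rw [← mul_assoc, ← r1, mul_assoc]
  have h4 : E * d = d + al * (F * (sal * d)) := by
    rw [r2]; noncomm_ring
  rw [mul_comm wb z]
  simp only [sub_mul, mul_sub, smul_mul_assoc, mul_smul_comm, smul_smul, smul_sub, sub_smul,
    mul_assoc]
  rw [h1, h2, h3, h4]
  simp only [mul_sub, smul_sub, mul_add, smul_add, mul_smul_comm, smul_smul, mul_assoc]
  abel

private lemma cd_rel {R : Type*} [Ring R] (al sal p q L Q : R)
    (hpL1 : p * L = 1) (hLp : L * p = 1) (hqQ : q * Q = 1) (hQq : Q * q = 1)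
    (hp2 : p * p = 1 - sal * al) (hq2 : q * q = 1 - al * sal) :
    al * (L * L) = Q * Q * al ∧ sal * (Q * Q) = L * L * sal ∧
      sal * (Q * Q) * al = L * L - 1 ∧ Q * Q = 1 + al * (L * L) * sal := by
  have cp : ∀ x : R, p * (L * x) = x := fun x => by rw [← mul_assoc, hpL1, one_mul]
  have cl : ∀ x : R, L * (p * x) = x := fun x => by rw [← mul_assoc, hLp, one_mul]
  have cq : ∀ x : R, q * (Q * x) = x := fun x => by rw [← mul_assoc, hqQ, one_mul]
  have cQ : ∀ x : R, Q * (q * x) = x := fun x => by rw [← mul_assoc, hQq, one_mul]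
  have key : al * (p * p) = q * q * al := by rw [hp2, hq2]; noncomm_ring
  have key2 : sal * (q * q) = p * p * sal := by rw [hp2, hq2]; noncomm_ring
  have r1 : al * (L * L) = Q * Q * al := by
    have h := congrArg (fun x => Q * (Q * (x * (L * L)))) key
    simp only [mul_assoc, cp, cq, cQ, cl, hpL1, hLp, hqQ, hQq, mul_one, one_mul] at h
    simp only [mul_assoc]
    exact h.symm
  have r3 : sal * (Q * Q) = L * L * sal := by
    have h := congrArg (fun x => L * (L * (x * (Q * Q)))) key2
    simp only [mul_assoc, cp, cq, cQ, cl, hpL1, hLp, hqQ, hQq, mul_one, one_mul] at h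
    simp only [mul_assoc]
    exact h.symm
  have r4 : sal * (Q * Q) * al = L * L - 1 := by
    have hsa : sal * al = 1 - p * p := by rw [hp2]; abel
    rw [r3, mul_assoc, hsa, mul_sub, mul_one]
    congr 1
    simp only [mul_assoc, cl, hLp]
  have r2 : Q * Q = 1 + al * (L * L) * sal := by
    have hsum : q * q + al * sal = 1 := by rw [hq2]; abel
    have hqq1 : Q * Q * (q * q) = 1 := by simp only [mul_assoc, cQ, hQq]
    calc Q * Q = Q * Q * (q * q + al * sal) := by rw [hsum, mul_one]
      _ = Q * Q * (q * q) + Q * Q * al * sal := by noncomm_ring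
      _ = 1 + al * (L * L) * sal := by rw [hqq1, ← r1]
  exact ⟨r1, r3, r4, r2⟩

theorem christoffel_darboux_left
    (α pL pR : ℕ → H →L[ℂ] H) (u v : ℕ → ℂ → H →L[ℂ] H)
    (hα : ∀ n, ‖α n‖ < 1)
    (hpL : ∀ n, (pL n).IsPositive ∧ pL n * pL n = 1 - adjoint (α n) * α n ∧ IsUnit (pL n))
    (hpR : ∀ n, (pR n).IsPositive ∧ pR n * pR n = 1 - α n * adjoint (α n) ∧ IsUnit (pR n))
    (hu0 : ∀ z : ℂ, u 0 z = 1) (hv0 : ∀ z : ℂ, v 0 z = 1)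
    (hrec : ∀ (n : ℕ) (z : ℂ),
      u (n + 1) z = z • (Ring.inverse (pL n) * u n z) -
          Ring.inverse (pL n) * adjoint (α n) * v n z ∧
      v (n + 1) z = Ring.inverse (pR n) * v n z -
          z • (Ring.inverse (pR n) * α n * u n z))
    (n : ℕ) (w z : ℂ) (hwz : (starRingEnd ℂ) w * z ≠ 1) :
    (1 - (starRingEnd ℂ) w * z) •
        ∑ k ∈ Finset.range (n + 1), adjoint (u k w) * u k z =
      adjoint (v n w) * v n z -
        ((starRingEnd ℂ) w * z) • (adjoint (u n w) * u n z) := by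
  induction n with
  | zero =>
      have hadj1 : adjoint (1 : H →L[ℂ] H) = 1 := by
        rw [← ContinuousLinearMap.star_eq_adjoint, star_one]
      simp only [zero_add, Finset.sum_range_one, hu0, hv0, hadj1, mul_one, sub_smul, one_smul]
  | succ n ih =>
      simp only [← ContinuousLinearMap.star_eq_adjoint] at ih ⊢
      obtain ⟨hppos, hp2, hpu⟩ := hpL n
      obtain ⟨hqpos, hq2, hqu⟩ := hpR n
      obtain ⟨hu', hv'⟩ := hrec n z
      obtain ⟨huw, hvw⟩ := hrec n w
      set t := (starRingEnd ℂ) w * z with ht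
      set al := α n with hal
      set p := pL n with hp
      set q := pR n with hq
      set L := Ring.inverse (pL n) with hL
      set Q := Ring.inverse (pR n) with hQ
      have hsp : star p = p := hppos.isSelfAdjoint
      have hsq : star q = q := hqpos.isSelfAdjoint
      have hpL1 : p * L = 1 := Ring.mul_inverse_cancel p hpu
      have hLp : L * p = 1 := Ring.inverse_mul_cancel p hpu
      have hqQ : q * Q = 1 := Ring.mul_inverse_cancel q hqu
      have hQq : Q * q = 1 := Ring.inverse_mul_cancel q hqu
      have hsL : star L = L := by
        have h1 : star L * p = 1 := by rw [← hsp, ← star_mul, hpL1, star_one]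
        calc star L = star L * (p * L) := by rw [hpL1, mul_one]
          _ = star L * p * L := by rw [mul_assoc]
          _ = L := by rw [h1, one_mul]
      have hsQ : star Q = Q := by
        have h1 : star Q * q = 1 := by rw [← hsq, ← star_mul, hqQ, star_one]
        calc star Q = star Q * (q * Q) := by rw [hqQ, mul_one]
          _ = star Q * q * Q := by rw [mul_assoc]
          _ = Q := by rw [h1, one_mul]
      have hp2' : p * p = 1 - star al * al := by
        rw [ContinuousLinearMap.star_eq_adjoint, hp2]
      have hq2' : q * q = 1 - al * star al := by
        rw [ContinuousLinearMap.star_eq_adjoint, hq2]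
      obtain ⟨r1, r3, r4, r2⟩ := cd_rel al (star al) p q L Q hpL1 hLp hqQ hQq hp2' hq2'
      set a := u n w with ha
      set b := v n w with hb
      set c := u n z with hc
      set d := v n z with hd
      simp only [← ContinuousLinearMap.star_eq_adjoint, ← hal, ← hL, ← hQ] at hu' hv' huw hvw
      have e1 : star (v (n+1) w) =
          (star b - ((starRingEnd ℂ) w) • (star a * star al)) * Q := by
        rw [hvw]
        simp only [star_sub, star_smul, star_mul, hsQ, hsL, star_star, Complex.star_def]
        noncomm_ring
      have e2 : v (n+1) z = Q * (d - z • (al * c)) := by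
        rw [hv']; noncomm_ring
      have e3 : star (u (n+1) w) = ((starRingEnd ℂ) w • star a - star b * al) * L := by
        rw [huw]
        simp only [star_sub, star_smul, star_mul, hsQ, hsL, star_star, Complex.star_def]
        noncomm_ring
      have e4 : u (n+1) z = L * (z • c - star al * d) := by
        rw [hu']; noncomm_ring
      have hkey : star (v (n+1) w) * v (n+1) z =
          star b * d - t • (star a * c) + star (u (n+1) w) * u (n+1) z := by
        have H := cd_core al (star al) (Q * Q) (L * L) (star a) (star b) c d
          ((starRingEnd ℂ) w) z r1 r3 r4 r2
        rw [e1, e2, e3, e4, ht]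
        simp only [mul_assoc] at H ⊢
        exact H
      rw [Finset.sum_range_succ, smul_add, ih, hkey, sub_smul, one_smul]
      abel
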